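/- Let ρ and σ be density matrices on an n-dimensional Hilbert space, with eigenvalues λ₁≤λ₂≤…≤λₙ of ρ (ascending) and μ₁≥μ₂≥…≥μₙ of σ (descending), including zeros. Then the quantum trace distance satisfies T(ρ,σ) ≤ ½ Σᵢ |λᵢ − μᵢ|, i.e. it is bounded by the classical (Kolmogorov) trace distance between the ascending eigenvalue vector of ρ and the descending eigenvalue vector of σ. -/

import Mathlib

open Matrix Kronecker
open scoped ComplexOrder

/-- The positive semidefinite square root of a positive semidefinite matrix (the definition
of `Matrix.PosSemidef.sqrt` in the older Mathlib, since removed). -/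
noncomputable def Matrix.PosSemidef.sqrt {n 𝕜 : Type*} [Fintype n] [RCLike 𝕜] [DecidableEq n]
    {A : Matrix n n 𝕜} (hA : A.PosSemidef) : Matrix n n 𝕜 :=
  hA.1.eigenvectorUnitary.1 * diagonal ((↑) ∘ (√·) ∘ hA.1.eigenvalues) *
  (star hA.1.eigenvectorUnitary : Matrix n n 𝕜)

/-- Trace distance `T(ρ,σ) = ½ Tr √((ρ−σ)†(ρ−σ))`. -/
noncomputable def traceDist {n : ℕ} (ρ σ : Matrix (Fin n) (Fin n) ℂ) : ℝ :=
  (1/2) * ((Matrix.posSemidef_conjTranspose_mul_self (ρ - σ)).sqrt).trace.re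

section helpers
variable {n : ℕ}


lemma trace_conj_unitary (U : Matrix.unitaryGroup (Fin n) ℂ) (D : Matrix (Fin n) (Fin n) ℂ) :
    ((U : Matrix (Fin n) (Fin n) ℂ) * D * star (U : Matrix (Fin n) (Fin n) ℂ)).trace = D.trace := by
  rw [Matrix.trace_mul_cycle, Matrix.UnitaryGroup.star_mul_self U,
    Matrix.one_mul]

lemma conj_mul_conj (U : Matrix.unitaryGroup (Fin n) ℂ) (D E : Matrix (Fin n) (Fin n) ℂ) :
    ((U : Matrix (Fin n) (Fin n) ℂ) * D * star (U : Matrix (Fin n) (Fin n) ℂ)) *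
    ((U : Matrix (Fin n) (Fin n) ℂ) * E * star (U : Matrix (Fin n) (Fin n) ℂ)) =
    (U : Matrix (Fin n) (Fin n) ℂ) * (D * E) * star (U : Matrix (Fin n) (Fin n) ℂ) := by
  have h : star (U : Matrix (Fin n) (Fin n) ℂ) * U = 1 := Matrix.UnitaryGroup.star_mul_self U
  calc (U : Matrix (Fin n) (Fin n) ℂ) * D * star (U : Matrix (Fin n) (Fin n) ℂ) *
      ((U : Matrix (Fin n) (Fin n) ℂ) * E * star (U : Matrix (Fin n) (Fin n) ℂ))
      = (U : Matrix (Fin n) (Fin n) ℂ) * D * (star (U : Matrix (Fin n) (Fin n) ℂ) * U) * E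
          * star (U : Matrix (Fin n) (Fin n) ℂ) := by
        simp only [Matrix.mul_assoc]
    _ = _ := by rw [h]; simp only [Matrix.mul_assoc, Matrix.mul_one, Matrix.one_mul]

open scoped MatrixOrder in
lemma psd_sqrt_eq_of_sq_eq {A B : Matrix (Fin n) (Fin n) ℂ} (hB : B.PosSemidef)
    (hA : A.PosSemidef) (h : B ^ 2 = A) : B = hA.sqrt := by
  have h1 : hA.sqrt = CFC.sqrt A := by
    rw [CFC.sqrt_eq_cfc, cfc_nnreal_eq_real _ A, hA.1.cfc_eq, Matrix.IsHermitian.cfc,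
      Unitary.conjStarAlgAut_apply, Matrix.PosSemidef.sqrt]
    congr 3
    funext i
    simp [hA.eigenvalues_nonneg i]
  rw [h1]
  exact (CFC.sqrt_unique (by rw [← h, pow_two]) hB.nonneg).symm

lemma sqrt_eq_abs {A : Matrix (Fin n) (Fin n) ℂ} (hA : A.IsHermitian) :
    (Matrix.posSemidef_conjTranspose_mul_self A).sqrt =
      (hA.eigenvectorUnitary : Matrix (Fin n) (Fin n) ℂ) *
        Matrix.diagonal (fun i => ((|hA.eigenvalues i| : ℝ) : ℂ)) *
        star (hA.eigenvectorUnitary : Matrix (Fin n) (Fin n) ℂ) := by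
  set U := hA.eigenvectorUnitary
  set D := Matrix.diagonal (fun i => ((|hA.eigenvalues i| : ℝ) : ℂ))
  have hpsd : ((U : Matrix (Fin n) (Fin n) ℂ) * D * star (U : Matrix (Fin n) (Fin n) ℂ)).PosSemidef := by
    have hd : Matrix.PosSemidef D := Matrix.PosSemidef.diagonal (fun i => by
      simp only [Pi.zero_apply]
      rw [Complex.zero_le_real]
      positivity)
    simpa [Matrix.star_eq_conjTranspose] using hd.mul_mul_conjTranspose_same (U : Matrix (Fin n) (Fin n) ℂ)
  refine (psd_sqrt_eq_of_sq_eq hpsd _ ?_).symm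
  rw [pow_two, conj_mul_conj]
  have hD2 : D * D = Matrix.diagonal (fun i => ((hA.eigenvalues i : ℂ)) * (hA.eigenvalues i : ℂ)) := by
    rw [Matrix.diagonal_mul_diagonal]
    have : (fun i => ((|hA.eigenvalues i| : ℝ) : ℂ) * ((|hA.eigenvalues i| : ℝ) : ℂ))
        = fun i => ((hA.eigenvalues i : ℂ)) * (hA.eigenvalues i : ℂ) := by
      funext i
      rw [← Complex.ofReal_mul, ← Complex.ofReal_mul, ← abs_mul, abs_mul_self]
    rw [this]
  rw [hD2, hA.eq]
  conv_rhs => rw [hA.spectral_theorem, Unitary.conjStarAlgAut_apply]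
  rw [conj_mul_conj, Matrix.diagonal_mul_diagonal]
  rfl

lemma traceDist_eq (ρ σ : Matrix (Fin n) (Fin n) ℂ) (hA : (ρ - σ).IsHermitian) :
    traceDist ρ σ = (1/2) * ∑ i, |hA.eigenvalues i| := by
  rw [traceDist, sqrt_eq_abs hA, trace_conj_unitary, Matrix.trace_diagonal]
  rw [Complex.re_sum]
  norm_num

lemma trace_eq_sum_eig {A : Matrix (Fin n) (Fin n) ℂ} (hA : A.IsHermitian) :
    A.trace = ∑ i, (hA.eigenvalues i : ℂ) := by
  conv_lhs => rw [hA.spectral_theorem, Unitary.conjStarAlgAut_apply]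
  rw [trace_conj_unitary, Matrix.trace_diagonal]
  rfl

lemma psd_diag_re_nonneg {M : Matrix (Fin n) (Fin n) ℂ} (hM : M.PosSemidef) (i : Fin n) :
    0 ≤ (M i i).re := by
  exact (Complex.le_def.mp hM.diag_nonneg).1

lemma trace_mul_diag (M : Matrix (Fin n) (Fin n) ℂ) (d : Fin n → ℂ) :
    (M * Matrix.diagonal d).trace = ∑ j, M j j * d j := by
  simp [Matrix.trace, Matrix.mul_diagonal, Matrix.diag]

lemma re_trace_mul (P : Matrix (Fin n) (Fin n) ℂ) {B : Matrix (Fin n) (Fin n) ℂ}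
    (hB : B.IsHermitian) :
    (P * B).trace.re = ∑ j, hB.eigenvalues j *
      ((star (hB.eigenvectorUnitary : Matrix (Fin n) (Fin n) ℂ) * P *
        (hB.eigenvectorUnitary : Matrix (Fin n) (Fin n) ℂ)) j j).re := by
  set V := (hB.eigenvectorUnitary : Matrix (Fin n) (Fin n) ℂ)
  conv_lhs => rw [hB.spectral_theorem, Unitary.conjStarAlgAut_apply]
  have : P * (V * Matrix.diagonal (RCLike.ofReal ∘ hB.eigenvalues) * star V)
      = (P * V) * Matrix.diagonal (RCLike.ofReal ∘ hB.eigenvalues) * star V := by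
    simp only [Matrix.mul_assoc]
  rw [this, Matrix.trace_mul_cycle, ← Matrix.mul_assoc, trace_mul_diag, Complex.re_sum]
  apply Finset.sum_congr rfl
  intro j _
  rw [Complex.mul_re]
  have : ((RCLike.ofReal ∘ hB.eigenvalues) j : ℂ) = ((hB.eigenvalues j : ℝ) : ℂ) := rfl
  simp [this]
  ring

section Pproj
variable {A : Matrix (Fin n) (Fin n) ℂ} (hA : A.IsHermitian)

noncomputable def Pproj : Matrix (Fin n) (Fin n) ℂ :=
  (hA.eigenvectorUnitary : Matrix (Fin n) (Fin n) ℂ) *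
    Matrix.diagonal (fun i => if 0 < hA.eigenvalues i then (1:ℂ) else 0) *
    star (hA.eigenvectorUnitary : Matrix (Fin n) (Fin n) ℂ)

lemma conj_diag_psd (U : Matrix.unitaryGroup (Fin n) ℂ) {d : Fin n → ℂ} (hd : ∀ i, 0 ≤ d i) :
    ((U : Matrix (Fin n) (Fin n) ℂ) * Matrix.diagonal d *
      star (U : Matrix (Fin n) (Fin n) ℂ)).PosSemidef := by
  have hdd : Matrix.PosSemidef (Matrix.diagonal d) := Matrix.PosSemidef.diagonal hd
  simpa [Matrix.star_eq_conjTranspose] using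
    hdd.mul_mul_conjTranspose_same (U : Matrix (Fin n) (Fin n) ℂ)

lemma Pproj_psd : (Pproj hA).PosSemidef :=
  conj_diag_psd _ (fun i => by split <;> norm_num)

lemma Pproj_one_sub_psd : ((1 : Matrix (Fin n) (Fin n) ℂ) - Pproj hA).PosSemidef := by
  have h1 : (1 : Matrix (Fin n) (Fin n) ℂ) - Pproj hA =
      (hA.eigenvectorUnitary : Matrix (Fin n) (Fin n) ℂ) *
        Matrix.diagonal (fun i => 1 - if 0 < hA.eigenvalues i then (1:ℂ) else 0) *
        star (hA.eigenvectorUnitary : Matrix (Fin n) (Fin n) ℂ) := by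
    have h2 : (1 : Matrix (Fin n) (Fin n) ℂ) -
        Matrix.diagonal (fun i => if 0 < hA.eigenvalues i then (1:ℂ) else 0) =
        Matrix.diagonal (fun i => 1 - if 0 < hA.eigenvalues i then (1:ℂ) else 0) := by
      rw [← Matrix.diagonal_one, ← Matrix.diagonal_sub]
    rw [← h2, Matrix.mul_sub, Matrix.mul_one, Matrix.sub_mul,
      (Matrix.mem_unitaryGroup_iff.mp hA.eigenvectorUnitary.2)]
    rfl
  rw [h1]
  exact conj_diag_psd _ (fun i => by split <;> norm_num)

end Pproj

section Pproj2
variable {A : Matrix (Fin n) (Fin n) ℂ} (hA : A.IsHermitian)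

lemma Pproj_trace :
    (Pproj hA).trace = ((Finset.univ.filter (fun i => 0 < hA.eigenvalues i)).card : ℂ) := by
  rw [Pproj, trace_conj_unitary, Matrix.trace_diagonal]
  rw [Finset.sum_boole]

lemma Pproj_mul_trace :
    ((Pproj hA) * A).trace.re = ∑ i, max (hA.eigenvalues i) 0 := by
  have h : (Pproj hA * A).trace.re =
      ((Pproj hA) * ((hA.eigenvectorUnitary : Matrix (Fin n) (Fin n) ℂ) *
        Matrix.diagonal (RCLike.ofReal ∘ hA.eigenvalues) *
        star (hA.eigenvectorUnitary : Matrix (Fin n) (Fin n) ℂ))).trace.re := by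
    rw [← Unitary.conjStarAlgAut_apply (S := ℂ), ← hA.spectral_theorem]
  rw [h, Pproj, conj_mul_conj, trace_conj_unitary, Matrix.diagonal_mul_diagonal, Matrix.trace_diagonal,
    Complex.re_sum]
  apply Finset.sum_congr rfl
  intro i _
  by_cases h : 0 < hA.eigenvalues i
  · simp [h, le_of_lt h, Function.comp, max_eq_left (le_of_lt h)]
  · simp [h, Function.comp, max_eq_right (le_of_not_gt h)]

end Pproj2

lemma lp_upper {k : ℕ} (hkn : k ≤ n) (lam eigl : Fin n → ℝ) (hmono : Monotone lam)
    (e : Equiv.Perm (Fin n)) (he : lam = eigl ∘ e)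
    (t : Fin n → ℝ) (ht0 : ∀ j, 0 ≤ t j) (ht1 : ∀ j, t j ≤ 1)
    (hts : ∑ j, t j = k) (i0 : Fin n) (hi0 : (i0 : ℕ) = n - k) :
    ∑ j, eigl j * t j ≤ ∑ j ∈ Finset.Ici i0, lam j := by
  set c := lam i0 with hc
  have hcard : (Finset.Ici i0).card = k := by
    rw [Fin.card_Ici, hi0]
    omega
  have step1 : ∀ j, eigl j * t j ≤ max (eigl j - c) 0 + c * t j := by
    intro j
    have : eigl j * t j = (eigl j - c) * t j + c * t j := by ring
    rw [this]
    gcongr ?_ + _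
    rcases le_or_gt (eigl j - c) 0 with h | h
    · have h1 := mul_nonpos_of_nonpos_of_nonneg h (ht0 j)
      have h2 := le_max_right (eigl j - c) (0:ℝ)
      linarith
    · have h1 : (eigl j - c) * t j ≤ (eigl j - c) * 1 := by nlinarith [ht1 j]
      have h2 := le_max_left (eigl j - c) (0:ℝ)
      linarith
  have step2 : ∑ j, eigl j * t j ≤ (∑ j, max (eigl j - c) 0) + c * k := by
    calc ∑ j, eigl j * t j ≤ ∑ j, (max (eigl j - c) 0 + c * t j) := Finset.sum_le_sum (fun j _ => step1 j)
      _ = (∑ j, max (eigl j - c) 0) + c * ∑ j, t j := by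
          rw [Finset.sum_add_distrib, Finset.mul_sum]
      _ = (∑ j, max (eigl j - c) 0) + c * k := by rw [hts]
  have hperm : ∑ j, max (eigl j - c) 0 = ∑ j, max (lam j - c) 0 := by
    rw [he]
    exact (Equiv.sum_comp e (fun j => max (eigl j - c) 0)).symm
  have step3 : ∑ j, max (lam j - c) 0 = ∑ j ∈ Finset.Ici i0, (lam j - c) := by
    rw [← Finset.sum_filter_add_sum_filter_not Finset.univ (fun j => i0 ≤ j)
      (fun j => max (lam j - c) 0)]
    have h1 : Finset.filter (fun j => i0 ≤ j) Finset.univ = Finset.Ici i0 := by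
      ext j; simp
    have h2 : ∀ j ∈ Finset.filter (fun j => ¬ i0 ≤ j) Finset.univ, max (lam j - c) 0 = 0 := by
      intro j hj
      simp only [Finset.mem_filter, not_le] at hj
      have : lam j ≤ c := hmono (le_of_lt hj.2)
      simp [max_eq_right, sub_nonpos.mpr this]
    rw [Finset.sum_eq_zero h2, add_zero, h1]
    apply Finset.sum_congr rfl
    intro j hj
    rw [Finset.mem_Ici] at hj
    have : c ≤ lam j := hmono hj
    rw [max_eq_left (sub_nonneg.mpr this)]
  have step4 : ∑ j ∈ Finset.Ici i0, (lam j - c) = (∑ j ∈ Finset.Ici i0, lam j) - c * k := by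
    rw [Finset.sum_sub_distrib, Finset.sum_const, hcard]
    ring
  calc ∑ j, eigl j * t j ≤ (∑ j, max (eigl j - c) 0) + c * k := step2
    _ = (∑ j ∈ Finset.Ici i0, lam j) - c * k + c * k := by rw [hperm, step3, step4]
    _ = ∑ j ∈ Finset.Ici i0, lam j := by ring

lemma lp_lower {k : ℕ} (hkn : k ≤ n) (mu eigm : Fin n → ℝ) (hanti : Antitone mu)
    (e : Equiv.Perm (Fin n)) (he : mu = eigm ∘ e)
    (s : Fin n → ℝ) (hs0 : ∀ j, 0 ≤ s j) (hs1 : ∀ j, s j ≤ 1)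
    (hss : ∑ j, s j = k) (i0 : Fin n) (hi0 : (i0 : ℕ) = n - k) :
    ∑ j ∈ Finset.Ici i0, mu j ≤ ∑ j, eigm j * s j := by
  have hmono : Monotone (fun j => -mu j) := fun a b hab => neg_le_neg (hanti hab)
  have he' : (fun j => -mu j) = (fun j => -eigm j) ∘ e := by
    funext j; simp [he]
  have h := lp_upper hkn (fun j => -mu j) (fun j => -eigm j) hmono e he' s hs0 hs1 hss i0 hi0
  have h1 : ∑ j, (fun j => -eigm j) j * s j = -∑ j, eigm j * s j := by
    rw [← Finset.sum_neg_distrib]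
    apply Finset.sum_congr rfl
    intro j _; ring
  have h2 : ∑ j ∈ Finset.Ici i0, (fun j => -mu j) j = -∑ j ∈ Finset.Ici i0, mu j := by
    rw [← Finset.sum_neg_distrib]
  rw [h1, h2] at h
  linarith

end helpers

/-- The quantum trace distance is bounded by the classical trace distance between the
ascending eigenvalue vector of ρ and the descending eigenvalue vector of σ. -/
theorem stmt_0 {n : ℕ} (ρ σ : Matrix (Fin n) (Fin n) ℂ)
    (hρ : ρ.PosSemidef) (hσ : σ.PosSemidef)
    (hρt : ρ.trace = 1) (hσt : σ.trace = 1)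
    (lam mu : Fin n → ℝ)
    (hlam_mono : Monotone lam) (hmu_anti : Antitone mu)
    (hlam : ∃ e : Equiv.Perm (Fin n), lam = hρ.1.eigenvalues ∘ e)
    (hmu : ∃ e : Equiv.Perm (Fin n), mu = hσ.1.eigenvalues ∘ e) :
    traceDist ρ σ ≤ (1/2) * ∑ i, |lam i - mu i| := by
  obtain ⟨eL, heL⟩ := hlam
  obtain ⟨eM, heM⟩ := hmu
  have hA : (ρ - σ).IsHermitian := hρ.1.sub hσ.1
  set ν := hA.eigenvalues with hν
  -- sum of eigenvalues of ρ - σ is 0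
  have htr0 : (ρ - σ).trace = 0 := by rw [Matrix.trace_sub, hρt, hσt, sub_self]
  have hνsum : ∑ i, ν i = 0 := by
    have h := trace_eq_sum_eig hA
    rw [htr0] at h
    have h2 : ((∑ i, ν i : ℝ) : ℂ) = 0 := by rw [Complex.ofReal_sum]; exact h.symm
    exact_mod_cast h2
  -- sums of lam and mu are 1
  have hlamsum : ∑ i, lam i = 1 := by
    have h := trace_eq_sum_eig hρ.1
    rw [hρt] at h
    have h2 : ((∑ i, hρ.1.eigenvalues i : ℝ) : ℂ) = 1 := by
      rw [Complex.ofReal_sum]; exact h.symm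
    have h3 : ∑ i, hρ.1.eigenvalues i = 1 := by exact_mod_cast h2
    rw [heL]
    rw [← h3]
    exact Equiv.sum_comp eL _
  have hmusum : ∑ i, mu i = 1 := by
    have h := trace_eq_sum_eig hσ.1
    rw [hσt] at h
    have h2 : ((∑ i, hσ.1.eigenvalues i : ℝ) : ℂ) = 1 := by
      rw [Complex.ofReal_sum]; exact h.symm
    have h3 : ∑ i, hσ.1.eigenvalues i = 1 := by exact_mod_cast h2
    rw [heM, ← h3]
    exact Equiv.sum_comp eM _
  -- reduce both sides to positive parts
  have hLHS : traceDist ρ σ = ∑ i, max (ν i) 0 := by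
    rw [traceDist_eq ρ σ hA]
    have : ∀ i, |ν i| = 2 * max (ν i) 0 - ν i := by
      intro i
      rcases le_or_gt (ν i) 0 with h | h
      · rw [abs_of_nonpos h, max_eq_right h]; ring
      · rw [abs_of_pos h, max_eq_left (le_of_lt h)]; ring
    rw [Finset.sum_congr rfl (fun i _ => this i), Finset.sum_sub_distrib, hνsum,
      ← Finset.mul_sum]
    ring
  have hRHS : (1/2 : ℝ) * ∑ i, |lam i - mu i| = ∑ i, max (lam i - mu i) 0 := by
    have : ∀ i, |lam i - mu i| = 2 * max (lam i - mu i) 0 - (lam i - mu i) := by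
      intro i
      rcases le_or_gt (lam i - mu i) 0 with h | h
      · rw [abs_of_nonpos h, max_eq_right h]; ring
      · rw [abs_of_pos h, max_eq_left (le_of_lt h)]; ring
    rw [Finset.sum_congr rfl (fun i _ => this i), Finset.sum_sub_distrib,
      Finset.sum_sub_distrib, hlamsum, hmusum, ← Finset.mul_sum]
    ring
  rw [hLHS, hRHS]
  -- the key inequality
  set k := (Finset.univ.filter (fun i => 0 < ν i)).card with hk
  rcases Nat.eq_zero_or_pos k with hk0 | hk1
  · -- no positive eigenvalues
    have hempty : ∀ i, ¬ (0 < ν i) := by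
      intro i hi
      have : i ∈ Finset.univ.filter (fun i => 0 < ν i) := by simp [hi]
      rw [Finset.card_eq_zero.mp hk0] at this
      exact absurd this (Finset.notMem_empty i)
    have h1 : ∑ i, max (ν i) 0 = 0 := by
      apply Finset.sum_eq_zero
      intro i _
      exact max_eq_right (le_of_not_gt (hempty i))
    rw [h1]
    exact Finset.sum_nonneg (fun i _ => le_max_right _ _)
  · have hkn : k ≤ n := by
      calc k ≤ Finset.univ.card := Finset.card_filter_le _ _
        _ = n := by simp
    have hi0lt : n - k < n := by omega
    set i0 : Fin n := ⟨n - k, hi0lt⟩ with hi0def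
    set P := Pproj hA with hP
    -- trace identities
    have hPA : (P * (ρ - σ)).trace.re = ∑ i, max (ν i) 0 := Pproj_mul_trace hA
    have hPsplit : (P * (ρ - σ)).trace.re = (P * ρ).trace.re - (P * σ).trace.re := by
      rw [Matrix.mul_sub, Matrix.trace_sub, Complex.sub_re]
    -- weights for ρ
    have key : ∀ (B : Matrix (Fin n) (Fin n) ℂ) (hB : B.PosSemidef),
        let V := (hB.1.eigenvectorUnitary : Matrix (Fin n) (Fin n) ℂ)
        let t := fun j => ((star V * P * V) j j).re
        (∀ j, 0 ≤ t j) ∧ (∀ j, t j ≤ 1) ∧ (∑ j, t j = k) ∧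
          ((P * B).trace.re = ∑ j, hB.1.eigenvalues j * t j) := by
      intro B hB
      set V := (hB.1.eigenvectorUnitary : Matrix (Fin n) (Fin n) ℂ) with hV
      set M := star V * P * V with hM
      have hVu : star V * V = 1 := Matrix.UnitaryGroup.star_mul_self _
      have hVu' : V * star V = 1 := Matrix.mem_unitaryGroup_iff.mp hB.1.eigenvectorUnitary.2
      have hMpsd : M.PosSemidef := by
        have := (Pproj_psd hA).conjTranspose_mul_mul_same V
        simpa [Matrix.star_eq_conjTranspose, hM] using this
      have hM1psd : ((1 : Matrix (Fin n) (Fin n) ℂ) - M).PosSemidef := by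
        have h2 := (Pproj_one_sub_psd hA).conjTranspose_mul_mul_same V
        have h3 : Vᴴ * (1 - P) * V = 1 - M := by
          rw [Matrix.mul_sub, Matrix.mul_one, Matrix.sub_mul, ← Matrix.star_eq_conjTranspose,
            hVu, hM]
        rwa [h3] at h2
      refine ⟨fun j => psd_diag_re_nonneg hMpsd j, fun j => ?_, ?_, ?_⟩
      · have h4 := psd_diag_re_nonneg hM1psd j
        have h5 : ((1 : Matrix (Fin n) (Fin n) ℂ) - M) j j = 1 - M j j := by
          simp [Matrix.sub_apply, Matrix.one_apply_eq]
        rw [h5] at h4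
        simp only [Complex.sub_re, Complex.one_re] at h4
        linarith
      · have h6 : ∑ j, ((M j j).re) = M.trace.re := by
          rw [Matrix.trace, Complex.re_sum]; rfl
        have h7 : M.trace = (k : ℂ) := by
          rw [hM, Matrix.trace_mul_cycle, hVu', Matrix.one_mul, hP,
            Pproj_trace hA]
        rw [h6, h7]
        simp
      · exact re_trace_mul P hB.1
    obtain ⟨ht0, ht1, hts, hPρ⟩ := key ρ hρ
    obtain ⟨hs0, hs1, hss, hPσ⟩ := key σ hσ
    have hup := lp_upper hkn lam hρ.1.eigenvalues hlam_mono eL heL _ ht0 ht1 hts i0 rfl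
    have hlo := lp_lower hkn mu hσ.1.eigenvalues hmu_anti eM heM _ hs0 hs1 hss i0 rfl
    have hstep : ∑ i, max (ν i) 0 ≤
        ∑ j ∈ Finset.Ici i0, lam j - ∑ j ∈ Finset.Ici i0, mu j := by
      rw [← hPA, hPsplit, hPρ, hPσ]
      linarith
    have hfinal : ∑ j ∈ Finset.Ici i0, lam j - ∑ j ∈ Finset.Ici i0, mu j ≤
        ∑ i, max (lam i - mu i) 0 := by
      rw [← Finset.sum_sub_distrib]
      calc ∑ j ∈ Finset.Ici i0, (lam j - mu j)
          ≤ ∑ j ∈ Finset.Ici i0, max (lam j - mu j) 0 :=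
            Finset.sum_le_sum (fun j _ => le_max_left _ _)
        _ ≤ ∑ i, max (lam i - mu i) 0 := by
            apply Finset.sum_le_sum_of_subset_of_nonneg (Finset.subset_univ _)
            intro i _ _
            exact le_max_right _ _
    linarith
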